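/- There exists a constant C > 0 such that the following holds. Let X be a measurable space, S ≥ 1 and B ≥ 1 natural numbers, and let ν be a probability measure on the batch space W := Fin S → (X × Bool × Bool). Let H be a nonempty countable set of measurable functions h : X → ℝ with 0 ≤ h x ≤ 1 for all x. Let μ̄ > 0, let N ≥ 1, and let G be a finite set of measurable functions g : X → ℝ with 0 ≤ g x ≤ 1, with card(G) ≤ N, such that for every h ∈ H there is g ∈ G with |h x − g x| ≤ μ̄/S for all x ∈ X. Then for every δ ∈ (0,1), the product measure ν^B on Fin B → W assigns measure at least 1 − δ to the set of tuples (w⁽¹⁾, …, w⁽ᴮ⁾) such that for every h ∈ H: ∫ constDP(h, w) dν(w) ≤ (1/B) ∑_{ℓ=1}^{B} constDP(h, w⁽ℓ⁾) + 2·(μ̄ + √(2·log N / B)) + C·√(log(1/δ)/B). -/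

import Mathlib

open MeasureTheory Real Finset

/-- A Boolean attribute viewed as the real number `0` or `1`. -/
noncomputable def bval (b : Bool) : ℝ := if b then 1 else 0

/-- The demographic-parity constraint of a classifier `h` on a batch of `S`
samples `w i = (xᵢ, aᵢ, yᵢ)`. -/
noncomputable def constDP {X : Type*} {S : ℕ} (h : X → ℝ)
    (w : Fin S → X × Bool × Bool) : ℝ :=
  |(∑ i, h (w i).1 * bval (w i).2.1) / (∑ i, bval (w i).2.1) -
    (∑ i, h (w i).1 * (1 - bval (w i).2.1)) / (∑ i, (1 - bval (w i).2.1))|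

section DPAux

lemma bval01 (b : Bool) : bval b = 0 ∨ bval b = 1 := by
  unfold bval; cases b <;> simp

lemma measurable_bval : Measurable bval := measurable_from_top

lemma sum01 {S : ℕ} (c : Fin S → ℝ) (hc : ∀ i, c i = 0 ∨ c i = 1) :
    (∑ i, c i = 0 ∨ 1 ≤ ∑ i, c i) := by
  by_cases h : ∀ i, c i = 0
  · left; simp [h]
  · right
    push_neg at h
    obtain ⟨i, hi⟩ := h
    have : c i = 1 := (hc i).resolve_left hi
    calc (1:ℝ) = c i := this.symm
      _ ≤ ∑ j, c j := Finset.single_le_sum (fun j _ => by rcases hc j with h|h <;> simp [h]) (mem_univ i)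

lemma c_nonneg {S : ℕ} {c : Fin S → ℝ} (hc : ∀ i, c i = 0 ∨ c i = 1) (i : Fin S) : 0 ≤ c i := by
  rcases hc i with h|h <;> simp [h]

lemma ratio_bounds {S : ℕ} (v c : Fin S → ℝ) (hc : ∀ i, c i = 0 ∨ c i = 1)
    (hv : ∀ i, 0 ≤ v i ∧ v i ≤ 1) :
    0 ≤ (∑ i, v i * c i) / (∑ i, c i) ∧ (∑ i, v i * c i) / (∑ i, c i) ≤ 1 := by
  rcases sum01 c hc with h0 | h1
  · rw [h0, div_zero]; exact ⟨le_refl _, zero_le_one⟩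
  · have hden : (0:ℝ) < ∑ i, c i := lt_of_lt_of_le one_pos h1
    constructor
    · exact div_nonneg (Finset.sum_nonneg fun i _ => mul_nonneg (hv i).1 (c_nonneg hc i)) hden.le
    · rw [div_le_one hden]
      exact Finset.sum_le_sum fun i _ => by
        nlinarith [(hv i).1, (hv i).2, c_nonneg hc i]

lemma ratio_diff {S : ℕ} (v w c : Fin S → ℝ) (hc : ∀ i, c i = 0 ∨ c i = 1)
    {r : ℝ} (hr : 0 ≤ r) (hvw : ∀ i, |v i - w i| ≤ r) :
    |(∑ i, v i * c i) / (∑ i, c i) - (∑ i, w i * c i) / (∑ i, c i)| ≤ r := by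
  rcases sum01 c hc with h0 | h1
  · simp [h0, div_zero, hr]
  · have hden : (0:ℝ) < ∑ i, c i := lt_of_lt_of_le one_pos h1
    rw [div_sub_div_same, abs_div, abs_of_pos hden, div_le_iff₀ hden]
    calc |∑ i, v i * c i - ∑ i, w i * c i| = |∑ i, (v i - w i) * c i| := by
          rw [← Finset.sum_sub_distrib]; congr 1; apply Finset.sum_congr rfl; intros; ring
      _ ≤ ∑ i, |(v i - w i) * c i| := Finset.abs_sum_le_sum_abs _ _
      _ ≤ ∑ i, r * c i := Finset.sum_le_sum fun i _ => by
          rw [abs_mul, abs_of_nonneg (c_nonneg hc i)]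
          exact mul_le_mul_of_nonneg_right (hvw i) (c_nonneg hc i)
      _ = r * ∑ i, c i := by rw [Finset.mul_sum]

lemma bval01' {X : Type*} {S : ℕ} (w : Fin S → X × Bool × Bool) (i : Fin S) :
    (1 : ℝ) - bval (w i).2.1 = 0 ∨ (1:ℝ) - bval (w i).2.1 = 1 := by
  rcases bval01 (w i).2.1 with h|h <;> simp [h]

lemma constDP_mem {X : Type*} {S : ℕ} (h : X → ℝ) (hh : ∀ x, 0 ≤ h x ∧ h x ≤ 1)
    (w : Fin S → X × Bool × Bool) : 0 ≤ constDP h w ∧ constDP h w ≤ 1 := by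
  unfold constDP
  obtain ⟨h1, h2⟩ := ratio_bounds (fun i => h (w i).1) (fun i => bval (w i).2.1)
    (fun i => bval01 _) (fun i => hh _)
  obtain ⟨h3, h4⟩ := ratio_bounds (fun i => h (w i).1) (fun i => 1 - bval (w i).2.1)
    (fun i => bval01' w i) (fun i => hh _)
  refine ⟨abs_nonneg _, abs_le.2 ⟨by linarith, by linarith⟩⟩

lemma constDP_diff {X : Type*} {S : ℕ} (hS : 1 ≤ S) (h g : X → ℝ) {μbar : ℝ} (hμ : 0 < μbar)
    (hdiff : ∀ x, |h x - g x| ≤ μbar / (S:ℝ)) (w : Fin S → X × Bool × Bool) :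
    |constDP h w - constDP g w| ≤ μbar := by
  have hS' : (1:ℝ) ≤ (S:ℝ) := by exact_mod_cast hS
  have hSpos : (0:ℝ) < S := by linarith
  have hr : (0:ℝ) ≤ μbar / S := div_nonneg hμ.le hSpos.le
  set c : Fin S → ℝ := fun i => bval (w i).2.1 with hc_def
  set c' : Fin S → ℝ := fun i => 1 - bval (w i).2.1 with hc'_def
  have hc : ∀ i, c i = 0 ∨ c i = 1 := fun i => bval01 _
  have hc' : ∀ i, c' i = 0 ∨ c' i = 1 := fun i => bval01' w i
  have hsum : (∑ i, c i) + (∑ i, c' i) = (S:ℝ) := by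
    rw [← Finset.sum_add_distrib]
    simp [hc_def, hc'_def]
  set p1 := (∑ i, h (w i).1 * c i) / (∑ i, c i)
  set p2 := (∑ i, h (w i).1 * c' i) / (∑ i, c' i)
  set q1 := (∑ i, g (w i).1 * c i) / (∑ i, c i)
  set q2 := (∑ i, g (w i).1 * c' i) / (∑ i, c' i)
  have key : |constDP h w - constDP g w| ≤ |p1 - q1| + |p2 - q2| := by
    have e1 : constDP h w = |p1 - p2| := rfl
    have e2 : constDP g w = |q1 - q2| := rfl
    rw [e1, e2]
    refine le_trans (abs_abs_sub_abs_le_abs_sub _ _) ?_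
    have e3 : (p1 - p2) - (q1 - q2) = (p1 - q1) - (p2 - q2) := by ring
    rw [e3]
    exact abs_sub _ _
  have d1 : |p1 - q1| ≤ μbar / S :=
    ratio_diff (fun i => h (w i).1) (fun i => g (w i).1) c hc hr (fun i => hdiff _)
  have d2 : |p2 - q2| ≤ μbar / S :=
    ratio_diff (fun i => h (w i).1) (fun i => g (w i).1) c' hc' hr (fun i => hdiff _)
  rcases sum01 c hc with h0 | h1
  · have : p1 = 0 ∧ q1 = 0 := by constructor <;> · show _ / _ = 0; rw [h0, div_zero]
    have e : |p1 - q1| = 0 := by rw [this.1, this.2]; simp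
    have : μbar / S ≤ μbar := div_le_self hμ.le hS'
    linarith [key]
  rcases sum01 c' hc' with h0' | h1'
  · have : p2 = 0 ∧ q2 = 0 := by constructor <;> · show _ / _ = 0; rw [h0', div_zero]
    have e : |p2 - q2| = 0 := by rw [this.1, this.2]; simp
    have : μbar / S ≤ μbar := div_le_self hμ.le hS'
    linarith [key]
  · have hS2 : (2:ℝ) ≤ (S:ℝ) := by linarith
    have : μbar / S ≤ μbar / 2 := by
      apply div_le_div_of_nonneg_left hμ.le (by norm_num) hS2
    linarith [key]

lemma measurable_constDP {X : Type*} [MeasurableSpace X] {S : ℕ} {h : X → ℝ}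
    (hh : Measurable h) : Measurable (fun w : Fin S → X × Bool × Bool => constDP h w) := by
  unfold constDP
  have m1 : ∀ i : Fin S, Measurable (fun w : Fin S → X × Bool × Bool => h (w i).1) :=
    fun i => hh.comp (measurable_fst.comp (measurable_pi_apply i))
  have m2 : ∀ i : Fin S, Measurable (fun w : Fin S → X × Bool × Bool => bval (w i).2.1) :=
    fun i => measurable_bval.comp (measurable_fst.comp (measurable_snd.comp (measurable_pi_apply i)))
  have s1 : Measurable (fun w : Fin S → X × Bool × Bool => ∑ i, h (w i).1 * bval (w i).2.1) :=
    Finset.measurable_sum univ (fun i _ => (m1 i).mul (m2 i))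
  have s2 : Measurable (fun w : Fin S → X × Bool × Bool => ∑ i, bval (w i).2.1) :=
    Finset.measurable_sum univ (fun i _ => m2 i)
  have s3 : Measurable (fun w : Fin S → X × Bool × Bool => ∑ i, h (w i).1 * (1 - bval (w i).2.1)) :=
    Finset.measurable_sum univ (fun i _ => (m1 i).mul (measurable_const.sub (m2 i)))
  have s4 : Measurable (fun w : Fin S → X × Bool × Bool => ∑ i, ((1:ℝ) - bval (w i).2.1)) :=
    Finset.measurable_sum univ (fun i _ => measurable_const.sub (m2 i))
  exact ((s1.div s2).sub (s3.div s4)).abs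

lemma integrable_of_bdd {α : Type*} [MeasurableSpace α] {μ : Measure α} [IsFiniteMeasure μ]
    {f : α → ℝ} (hf : Measurable f) {C : ℝ} (h : ∀ x, |f x| ≤ C) : Integrable f μ :=
  (integrable_const C).mono' hf.aestronglyMeasurable (ae_of_all _ (by simpa [Real.norm_eq_abs] using h))

lemma exp_le_cosh_add (t x : ℝ) (hx1 : -1 ≤ x) (hx2 : x ≤ 1) :
    Real.exp (t * x) ≤ (Real.exp t + Real.exp (-t)) / 2 + x * ((Real.exp t - Real.exp (-t)) / 2) := by
  have h := convexOn_exp.2 (Set.mem_univ (-t)) (Set.mem_univ t)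
    (by linarith : (0:ℝ) ≤ (1 - x) / 2) (by linarith : (0:ℝ) ≤ (1 + x) / 2) (by ring)
  simp only [smul_eq_mul] at h
  have e : (1 - x) / 2 * (-t) + (1 + x) / 2 * t = t * x := by ring
  rw [e] at h
  calc Real.exp (t * x) ≤ (1 - x) / 2 * Real.exp (-t) + (1 + x) / 2 * Real.exp t := h
    _ = (Real.exp t + Real.exp (-t)) / 2 + x * ((Real.exp t - Real.exp (-t)) / 2) := by ring

lemma chernoff {W : Type*} [MeasurableSpace W] (ν : Measure W) [IsProbabilityMeasure ν]
    (B : ℕ) (φ : W → ℝ) (hm : Measurable φ)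
    (h0 : ∀ w, 0 ≤ φ w) (h1 : ∀ w, φ w ≤ 1) {ε : ℝ} (hε : 0 ≤ ε) :
    (Measure.pi fun _ : Fin B => ν)
      {ws : Fin B → W | (B:ℝ) * ε ≤ ∑ ℓ : Fin B, ((∫ w, φ w ∂ν) - φ (ws ℓ))}
      ≤ ENNReal.ofReal (Real.exp (-(B:ℝ) * ε^2 / 2)) := by
  letI : MeasureSpace W := ⟨ν⟩
  set m : ℝ := ∫ w, φ w ∂ν with hm_def
  have hm0 : 0 ≤ m := integral_nonneg h0
  have hm1 : m ≤ 1 := by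
    calc m ≤ ∫ _ : W, (1:ℝ) ∂ν := integral_mono (integrable_of_bdd hm (fun w => by
            rw [abs_le]; exact ⟨by linarith [h0 w], h1 w⟩)) (integrable_const 1) h1
      _ = 1 := by simp
  set ψ : W → ℝ := fun w => m - φ w with hψ_def
  have hψm : Measurable ψ := measurable_const.sub hm
  have hψb : ∀ w, |ψ w| ≤ 1 := fun w => abs_le.2 ⟨by simp [hψ_def]; linarith [h1 w], by simp [hψ_def]; linarith [h0 w]⟩
  have hψint : ∫ w, ψ w ∂ν = 0 := by
    rw [hψ_def]
    rw [integral_sub (integrable_const m) (integrable_of_bdd hm (fun w => by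
      rw [abs_le]; exact ⟨by linarith [h0 w], h1 w⟩))]
    simp [hm_def]
  have hsingle : ∫ w, Real.exp (ε * ψ w) ∂ν ≤ Real.exp (ε^2 / 2) := by
    have hptw : ∀ w, Real.exp (ε * ψ w) ≤
        (Real.exp ε + Real.exp (-ε)) / 2 + ψ w * ((Real.exp ε - Real.exp (-ε)) / 2) := fun w =>
      exp_le_cosh_add ε (ψ w) (neg_le_of_abs_le (hψb w)) (le_of_abs_le (hψb w))
    have hintexp : Integrable (fun w => Real.exp (ε * ψ w)) ν :=
      integrable_of_bdd (Real.measurable_exp.comp (hψm.const_mul ε)) (C := Real.exp ε)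
        (fun w => by
          rw [abs_of_pos (Real.exp_pos _), Real.exp_le_exp]
          nlinarith [hψb w, abs_le.1 (hψb w)])
    calc ∫ w, Real.exp (ε * ψ w) ∂ν
        ≤ ∫ w, ((Real.exp ε + Real.exp (-ε)) / 2 + ψ w * ((Real.exp ε - Real.exp (-ε)) / 2)) ∂ν := by
          apply integral_mono hintexp _ hptw
          exact (integrable_const _).add ((integrable_of_bdd hψm hψb).mul_const _)
      _ = (Real.exp ε + Real.exp (-ε)) / 2 := by
          rw [integral_add (integrable_const _) ((integrable_of_bdd hψm hψb).mul_const _),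
            integral_mul_const, hψint]
          simp
      _ = Real.cosh ε := by rw [Real.cosh_eq]
      _ ≤ Real.exp (ε^2 / 2) := Real.cosh_le_exp_half_sq ε
  set X : (Fin B → W) → ℝ := fun ws => ∑ ℓ : Fin B, ψ (ws ℓ) with hX_def
  have hXm : Measurable X :=
    Finset.measurable_sum univ (fun ℓ _ => hψm.comp (measurable_pi_apply ℓ))
  have hXb : ∀ ws, |X ws| ≤ (B:ℝ) := fun ws => by
    calc |X ws| ≤ ∑ ℓ : Fin B, |ψ (ws ℓ)| := Finset.abs_sum_le_sum_abs _ _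
      _ ≤ ∑ _ℓ : Fin B, (1:ℝ) := Finset.sum_le_sum (fun ℓ _ => hψb _)
      _ = (B:ℝ) := by simp
  have hXint : Integrable (fun ws => Real.exp (ε * X ws)) (Measure.pi fun _ : Fin B => ν) :=
    integrable_of_bdd (Real.measurable_exp.comp (hXm.const_mul ε)) (C := Real.exp (ε * B))
      (fun ws => by
        rw [abs_of_pos (Real.exp_pos _), Real.exp_le_exp]
        have := le_of_abs_le (hXb ws)
        nlinarith [hXb ws])
  have hcher := ProbabilityTheory.measure_ge_le_exp_mul_mgf (X := X)
    (μ := Measure.pi fun _ : Fin B => ν) ((B:ℝ) * ε) hε hXint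
  have hvols : (volume : Measure (Fin B → W)) = Measure.pi fun _ : Fin B => ν := by
    rw [MeasureTheory.volume_pi]; rfl
  have hmgf : ProbabilityTheory.mgf X (Measure.pi fun _ : Fin B => ν) ε
      ≤ Real.exp ((B:ℝ) * ε^2 / 2) := by
    have heq : ProbabilityTheory.mgf X (Measure.pi fun _ : Fin B => ν) ε
        = (∫ w, Real.exp (ε * ψ w) ∂ν) ^ B := by
      unfold ProbabilityTheory.mgf
      rw [← hvols]
      have : ∀ ws : Fin B → W, Real.exp (ε * X ws) = ∏ ℓ : Fin B, Real.exp (ε * ψ (ws ℓ)) := by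
        intro ws
        rw [← Real.exp_sum]
        congr 1
        rw [hX_def, Finset.mul_sum]
      simp_rw [this]
      rw [hvols, MeasureTheory.integral_fintype_prod_eq_pow (fun w => Real.exp (ε * ψ w))]
      simp only [Fintype.card_fin]
    rw [heq]
    calc (∫ w, Real.exp (ε * ψ w) ∂ν) ^ B ≤ (Real.exp (ε^2/2)) ^ B := by
          apply pow_le_pow_left₀ (integral_nonneg (fun w => (Real.exp_pos _).le)) hsingle
      _ = Real.exp ((B:ℝ) * ε^2 / 2) := by
          rw [← Real.exp_nat_mul]; ring_nf
  have hfinal : Real.exp (-ε * ((B:ℝ) * ε)) * ProbabilityTheory.mgf X (Measure.pi fun _ : Fin B => ν) ε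
      ≤ Real.exp (-(B:ℝ) * ε^2 / 2) := by
    calc Real.exp (-ε * ((B:ℝ) * ε)) * ProbabilityTheory.mgf X (Measure.pi fun _ : Fin B => ν) ε
        ≤ Real.exp (-ε * ((B:ℝ) * ε)) * Real.exp ((B:ℝ) * ε^2 / 2) :=
          mul_le_mul_of_nonneg_left hmgf (Real.exp_pos _).le
      _ = Real.exp (-(B:ℝ) * ε^2 / 2) := by rw [← Real.exp_add]; ring_nf
  refine (ENNReal.le_ofReal_iff_toReal_le (measure_ne_top _ _) (Real.exp_pos _).le).2 ?_
  exact le_trans hcher hfinal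

end DPAux

theorem dp_generalization_bound :
    ∃ C : ℝ, 0 < C ∧
      ∀ (X : Type) [MeasurableSpace X], ∀ (S B : ℕ), 1 ≤ S → 1 ≤ B →
      ∀ (ν : Measure (Fin S → X × Bool × Bool)) [IsProbabilityMeasure ν],
      ∀ (H : Set (X → ℝ)), H.Nonempty → H.Countable →
        (∀ h ∈ H, Measurable h) → (∀ h ∈ H, ∀ x, 0 ≤ h x ∧ h x ≤ 1) →
      ∀ (μbar : ℝ), 0 < μbar →
      ∀ (N : ℕ), 1 ≤ N →
      ∀ (G : Finset (X → ℝ)),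
        (∀ g ∈ G, Measurable g) → (∀ g ∈ G, ∀ x, 0 ≤ g x ∧ g x ≤ 1) →
        G.card ≤ N →
        (∀ h ∈ H, ∃ g ∈ G, ∀ x, |h x - g x| ≤ μbar / (S : ℝ)) →
      ∀ δ : ℝ, 0 < δ → δ < 1 →
        ENNReal.ofReal (1 - δ) ≤
          (Measure.pi fun _ : Fin B => ν)
            {ws : Fin B → (Fin S → X × Bool × Bool) |
              ∀ h ∈ H,
                ∫ w, constDP h w ∂ν ≤
                  (1 / (B : ℝ)) * ∑ ℓ : Fin B, constDP h (ws ℓ)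
                    + 2 * (μbar + Real.sqrt (2 * Real.log (N : ℝ) / (B : ℝ)))
                    + C * Real.sqrt (Real.log (1 / δ) / (B : ℝ))} := by
  refine ⟨2, two_pos, ?_⟩
  intro X _ S B hS hB ν _ H _ _ hHmeas hHbd μbar hμ N hN G hGmeas hGbd hGcard hcov δ hδ0 hδ1
  have hBpos : (0:ℝ) < B := by exact_mod_cast hB
  have hNpos : (0:ℝ) < N := by exact_mod_cast hN
  have hN1 : (1:ℝ) ≤ N := by exact_mod_cast hN
  set ε1 : ℝ := Real.sqrt (2 * Real.log (N : ℝ) / (B : ℝ)) with hε1_def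
  set ε2 : ℝ := Real.sqrt (Real.log (1 / δ) / (B : ℝ)) with hε2_def
  set ε : ℝ := 2 * ε1 + 2 * ε2 with hε_def
  have hε1n : 0 ≤ ε1 := Real.sqrt_nonneg _
  have hε2n : 0 ≤ ε2 := Real.sqrt_nonneg _
  have hεn : 0 ≤ ε := by positivity
  have hlogN : 0 ≤ Real.log (N:ℝ) := Real.log_nonneg hN1
  have hlogδ : 0 ≤ Real.log (1/δ) := Real.log_nonneg (by rw [le_div_iff₀ hδ0]; linarith)
  -- the exponential tail is at most δ / N
  have htail : Real.exp (-(B:ℝ) * ε^2 / 2) ≤ δ / N := by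
    have ha : (0:ℝ) ≤ 2 * Real.log (N:ℝ) / B := by positivity
    have hb : (0:ℝ) ≤ Real.log (1/δ) / B := by positivity
    have hε1sq : ε1^2 = 2 * Real.log (N:ℝ) / B := Real.sq_sqrt ha
    have hε2sq : ε2^2 = Real.log (1/δ) / B := Real.sq_sqrt hb
    have hsq : 4 * (2 * Real.log (N:ℝ) / B) + 4 * (Real.log (1/δ) / B) ≤ ε^2 := by
      have : ε^2 = 4 * ε1^2 + 8 * (ε1 * ε2) + 4 * ε2^2 := by rw [hε_def]; ring
      nlinarith [mul_nonneg hε1n hε2n]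
    have hBε : 4 * Real.log (N:ℝ) + 2 * Real.log (1/δ) ≤ (B:ℝ) * ε^2 / 2 := by
      have h1 : (B:ℝ) * (2 * Real.log (N:ℝ) / B) = 2 * Real.log (N:ℝ) := by
        field_simp
      have h2 : (B:ℝ) * (Real.log (1/δ) / B) = Real.log (1/δ) := by
        field_simp
      nlinarith [mul_le_mul_of_nonneg_left hsq hBpos.le]
    rw [← Real.exp_log (show (0:ℝ) < δ / N by positivity)]
    rw [Real.exp_le_exp]
    have hlogdiv : Real.log (δ / N) = Real.log δ - Real.log (N:ℝ) :=
      Real.log_div (ne_of_gt hδ0) (ne_of_gt hNpos)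
    have hloginv : Real.log (1/δ) = - Real.log δ := by
      rw [one_div, Real.log_inv]
    have hlogδneg : Real.log δ ≤ 0 := Real.log_nonpos hδ0.le hδ1.le
    rw [hlogdiv]
    rw [hloginv] at hBε
    linarith
  -- bad events
  set Wt := Fin S → X × Bool × Bool
  set Pm : Measure (Fin B → Wt) := Measure.pi fun _ : Fin B => ν with hPm_def
  set bad : (X → ℝ) → Set (Fin B → Wt) := fun g =>
    {ws | (B:ℝ) * ε ≤ ∑ ℓ : Fin B, ((∫ w, constDP g w ∂ν) - constDP g (ws ℓ))} with hbad_def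
  have hbad_meas : ∀ g ∈ G, MeasurableSet (bad g) := by
    intro g hg
    exact measurableSet_le measurable_const
      (Finset.measurable_sum univ (fun ℓ _ =>
        measurable_const.sub ((measurable_constDP (hGmeas g hg)).comp (measurable_pi_apply ℓ))))
  have hbad_small : ∀ g ∈ G, Pm (bad g) ≤ ENNReal.ofReal (δ / N) := by
    intro g hg
    refine le_trans (chernoff ν B (fun w => constDP g w) (measurable_constDP (hGmeas g hg))
      (fun w => (constDP_mem g (hGbd g hg) w).1) (fun w => (constDP_mem g (hGbd g hg) w).2) hεn) ?_
    exact ENNReal.ofReal_le_ofReal htail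
  set bigbad : Set (Fin B → Wt) := ⋃ g ∈ G, bad g with hbigbad_def
  have hbigbad_meas : MeasurableSet bigbad :=
    Finset.measurableSet_biUnion G hbad_meas
  have hbigbad_small : Pm bigbad ≤ ENNReal.ofReal δ := by
    calc Pm bigbad ≤ ∑ g ∈ G, Pm (bad g) := measure_biUnion_finset_le G bad
      _ ≤ ∑ _g ∈ G, ENNReal.ofReal (δ / N) := Finset.sum_le_sum hbad_small
      _ = (G.card : ENNReal) * ENNReal.ofReal (δ / N) := by
          rw [Finset.sum_const, nsmul_eq_mul]
      _ ≤ (N : ENNReal) * ENNReal.ofReal (δ / N) := by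
          refine mul_le_mul_left ?_ _
          exact_mod_cast hGcard
      _ = ENNReal.ofReal δ := by
          rw [← ENNReal.ofReal_natCast N, ← ENNReal.ofReal_mul (by positivity)]
          congr 1
          field_simp
  -- inclusion of the complement in the good set
  have hincl : bigbadᶜ ⊆ {ws : Fin B → Wt |
      ∀ h ∈ H,
        ∫ w, constDP h w ∂ν ≤
          (1 / (B : ℝ)) * ∑ ℓ : Fin B, constDP h (ws ℓ)
            + 2 * (μbar + ε1) + 2 * ε2} := by
    intro ws hws
    intro h hH
    obtain ⟨g, hgG, hgcov⟩ := hcov h hH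
    have hnotbad : ws ∉ bad g := by
      intro hmem
      exact hws (Set.mem_biUnion hgG hmem)
    have hlt : ∑ ℓ : Fin B, ((∫ w, constDP g w ∂ν) - constDP g (ws ℓ)) < (B:ℝ) * ε :=
      lt_of_not_ge hnotbad
    have hsum_eq : ∑ ℓ : Fin B, ((∫ w, constDP g w ∂ν) - constDP g (ws ℓ))
        = (B:ℝ) * (∫ w, constDP g w ∂ν) - ∑ ℓ : Fin B, constDP g (ws ℓ) := by
      rw [Finset.sum_sub_distrib, Finset.sum_const]
      simp [nsmul_eq_mul]
    rw [hsum_eq] at hlt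
    -- integrability
    have hint_h : Integrable (fun w => constDP h w) ν :=
      integrable_of_bdd (measurable_constDP (hHmeas h hH)) (C := 1) (fun w => by
        have := constDP_mem h (hHbd h hH) w
        rw [abs_le]; exact ⟨by linarith [this.1], this.2⟩)
    have hint_g : Integrable (fun w => constDP g w) ν :=
      integrable_of_bdd (measurable_constDP (hGmeas g hgG)) (C := 1) (fun w => by
        have := constDP_mem g (hGbd g hgG) w
        rw [abs_le]; exact ⟨by linarith [this.1], this.2⟩)
    -- pointwise comparisons
    have hpt : ∀ w : Wt, constDP h w ≤ constDP g w + μbar := fun w => by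
      have := abs_le.1 (constDP_diff hS h g hμ hgcov w)
      linarith [this.1, this.2]
    have hpt' : ∀ w : Wt, constDP g w ≤ constDP h w + μbar := fun w => by
      have := abs_le.1 (constDP_diff hS h g hμ hgcov w)
      linarith [this.1, this.2]
    have hint_cmp : ∫ w, constDP h w ∂ν ≤ (∫ w, constDP g w ∂ν) + μbar := by
      calc ∫ w, constDP h w ∂ν ≤ ∫ w, (constDP g w + μbar) ∂ν :=
            integral_mono hint_h (hint_g.add (integrable_const μbar)) hpt
        _ = (∫ w, constDP g w ∂ν) + μbar := by
            rw [integral_add hint_g (integrable_const μbar)]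
            simp
    have hsum_cmp : ∑ ℓ : Fin B, constDP g (ws ℓ) ≤ (∑ ℓ : Fin B, constDP h (ws ℓ)) + (B:ℝ) * μbar := by
      calc ∑ ℓ : Fin B, constDP g (ws ℓ) ≤ ∑ ℓ : Fin B, (constDP h (ws ℓ) + μbar) :=
            Finset.sum_le_sum (fun ℓ _ => hpt' _)
        _ = (∑ ℓ : Fin B, constDP h (ws ℓ)) + (B:ℝ) * μbar := by
            rw [Finset.sum_add_distrib, Finset.sum_const]
            simp [nsmul_eq_mul]
    -- combine
    have hkey : (B:ℝ) * (∫ w, constDP h w ∂ν)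
        ≤ (∑ ℓ : Fin B, constDP h (ws ℓ)) + (B:ℝ) * (2 * μbar + ε) := by
      nlinarith [hlt, hint_cmp, hsum_cmp, hBpos]
    have : ∫ w, constDP h w ∂ν ≤ (1/(B:ℝ)) * (∑ ℓ : Fin B, constDP h (ws ℓ)) + (2 * μbar + ε) := by
      have h2 := mul_le_mul_of_nonneg_left hkey (show (0:ℝ) ≤ 1/(B:ℝ) by positivity)
      have e1 : (1/(B:ℝ)) * ((B:ℝ) * (∫ w, constDP h w ∂ν)) = ∫ w, constDP h w ∂ν := by
        field_simp
      have e2 : (1/(B:ℝ)) * ((∑ ℓ : Fin B, constDP h (ws ℓ)) + (B:ℝ) * (2 * μbar + ε))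
          = (1/(B:ℝ)) * (∑ ℓ : Fin B, constDP h (ws ℓ)) + (2 * μbar + ε) := by
        field_simp
      rw [e1, e2] at h2
      exact h2
    calc ∫ w, constDP h w ∂ν
        ≤ (1/(B:ℝ)) * (∑ ℓ : Fin B, constDP h (ws ℓ)) + (2 * μbar + ε) := this
      _ = (1 / (B : ℝ)) * ∑ ℓ : Fin B, constDP h (ws ℓ) + 2 * (μbar + ε1) + 2 * ε2 := by
          rw [hε_def]; ring
  -- conclude
  calc ENNReal.ofReal (1 - δ) = 1 - ENNReal.ofReal δ := by
        rw [ENNReal.ofReal_sub _ hδ0.le, ENNReal.ofReal_one]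
    _ ≤ 1 - Pm bigbad := tsub_le_tsub_left hbigbad_small 1
    _ = Pm bigbadᶜ := (prob_compl_eq_one_sub hbigbad_meas).symm
    _ ≤ _ := measure_mono hincl
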